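/- For any functions $l_1, l_2, f: \mathbb{R} \to \mathbb{R}$ and all $n \ge 0$: $\overrightarrow{\nabla_x^{(n)} \boxdot(l_1(x) + l_2(x)) f(x)} = \overrightarrow{\nabla_x^{(n)} \boxdot(l_1(x)) \boxdot(l_2(x)) f(x)}$, i.e., summation inside MagicBox is equivalent under forward evaluation to multiplication of separate MagicBoxes. -/

import Mathlib

/-- Expressions of one real variable, built from constants, the variable, addition,
multiplication, negation, the exponential, and the stop-gradient operator `⊥`. -/
inductive Expr : Type
  | const : ℝ → Expr
  | var : Expr
  | add : Expr → Expr → Expr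
  | mul : Expr → Expr → Expr
  | neg : Expr → Expr
  | exp : Expr → Expr
  | bot : Expr → Expr

/-- Forward-mode evaluation: the stop-gradient operator acts as the identity. -/
noncomputable def Expr.fwd : Expr → ℝ → ℝ
  | const c, _ => c
  | var, x => x
  | add a b, x => a.fwd x + b.fwd x
  | mul a b, x => a.fwd x * b.fwd x
  | neg a, x => -(a.fwd x)
  | exp a, x => Real.exp (a.fwd x)
  | bot a, x => a.fwd x

/-- Symbolic differentiation: `∇ₓ ⊥(f x) = 0`. -/
def Expr.D : Expr → Expr
  | const _ => const 0
  | var => const 1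
  | add a b => add a.D b.D
  | mul a b => add (mul a.D b) (mul a b.D)
  | neg a => neg a.D
  | exp a => mul (exp a) a.D
  | bot _ => const 0

/-- The MagicBox operator `⊡(e) = exp (e - ⊥(e))`. -/
def magicbox (e : Expr) : Expr := Expr.exp (Expr.add e (Expr.neg (Expr.bot e)))

namespace MBox

open Expr

/-- Two expressions are related if all iterated symbolic derivatives agree under `fwd`. -/
def R (a b : Expr) : Prop := ∀ n x, (Expr.D^[n] a).fwd x = (Expr.D^[n] b).fwd x

lemma D_iter_add (n : ℕ) : ∀ a b : Expr,
    Expr.D^[n] (.add a b) = .add (Expr.D^[n] a) (Expr.D^[n] b) := by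
  induction n with
  | zero => intro a b; rfl
  | succ n ih =>
      intro a b
      simp only [Function.iterate_succ_apply]
      exact ih a.D b.D

lemma D_iter_neg (n : ℕ) : ∀ a : Expr,
    Expr.D^[n] (.neg a) = .neg (Expr.D^[n] a) := by
  induction n with
  | zero => intro a; rfl
  | succ n ih =>
      intro a
      simp only [Function.iterate_succ_apply]
      exact ih a.D

lemma D_iter_zero (n : ℕ) : Expr.D^[n] (.const 0) = .const 0 := by
  induction n with
  | zero => rfl
  | succ n ih => simpa only [Function.iterate_succ_apply, Expr.D] using ih

lemma c_add (n : ℕ) (a b : Expr) (x : ℝ) :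
    (Expr.D^[n] (.add a b)).fwd x = (Expr.D^[n] a).fwd x + (Expr.D^[n] b).fwd x := by
  rw [D_iter_add]; rfl

lemma c_neg (n : ℕ) (a : Expr) (x : ℝ) :
    (Expr.D^[n] (.neg a)).fwd x = -((Expr.D^[n] a).fwd x) := by
  rw [D_iter_neg]; rfl

lemma c_zero (n : ℕ) (x : ℝ) : (Expr.D^[n] (Expr.const 0)).fwd x = 0 := by
  rw [D_iter_zero]; rfl

lemma c_succ (n : ℕ) (a : Expr) (x : ℝ) :
    (Expr.D^[n+1] a).fwd x = (Expr.D^[n] a.D).fwd x := by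
  rw [Function.iterate_succ_apply]

lemma R.refl (a : Expr) : R a a := fun _ _ => rfl
lemma R.symm' {a b : Expr} (h : R a b) : R b a := fun n x => (h n x).symm
lemma R.trans' {a b c : Expr} (h1 : R a b) (h2 : R b c) : R a c :=
  fun n x => (h1 n x).trans (h2 n x)

lemma R.D {a b : Expr} (h : R a b) : R a.D b.D := by
  intro n x
  have := h (n+1) x
  simpa only [Function.iterate_succ_apply] using this

lemma R.add {a₁ a₂ b₁ b₂ : Expr} (ha : R a₁ a₂) (hb : R b₁ b₂) :
    R (.add a₁ b₁) (.add a₂ b₂) := by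
  intro n x
  rw [c_add, c_add, ha n x, hb n x]

lemma R.neg {a₁ a₂ : Expr} (ha : R a₁ a₂) : R (.neg a₁) (.neg a₂) := by
  intro n x
  rw [c_neg, c_neg, ha n x]

lemma mul_congr_aux (n : ℕ) : ∀ a₁ a₂ b₁ b₂ : Expr, R a₁ a₂ → R b₁ b₂ → ∀ x,
    (Expr.D^[n] (.mul a₁ b₁)).fwd x = (Expr.D^[n] (.mul a₂ b₂)).fwd x := by
  induction n with
  | zero =>
      intro a₁ a₂ b₁ b₂ ha hb x
      have h1 : a₁.fwd x = a₂.fwd x := ha 0 x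
      have h2 : b₁.fwd x = b₂.fwd x := hb 0 x
      show a₁.fwd x * b₁.fwd x = a₂.fwd x * b₂.fwd x
      rw [h1, h2]
  | succ n ih =>
      intro a₁ a₂ b₁ b₂ ha hb x
      rw [c_succ, c_succ]
      show (Expr.D^[n] (.add (.mul a₁.D b₁) (.mul a₁ b₁.D))).fwd x
        = (Expr.D^[n] (.add (.mul a₂.D b₂) (.mul a₂ b₂.D))).fwd x
      rw [c_add, c_add, ih _ _ _ _ ha.D hb x, ih _ _ _ _ ha hb.D x]

lemma R.mul {a₁ a₂ b₁ b₂ : Expr} (ha : R a₁ a₂) (hb : R b₁ b₂) :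
    R (.mul a₁ b₁) (.mul a₂ b₂) := fun n x => mul_congr_aux n _ _ _ _ ha hb x

instance setoid : Setoid Expr := ⟨R, ⟨R.refl, R.symm', R.trans'⟩⟩

/-- The quotient of `Expr` by agreement of all forward-evaluated derivatives. -/
def Q : Type := Quotient setoid

def mk (a : Expr) : Q := Quotient.mk setoid a

instance : Add Q := ⟨Quotient.map₂ .add (fun _ _ h _ _ h' => R.add h h')⟩
instance : Mul Q := ⟨Quotient.map₂ .mul (fun _ _ h _ _ h' => R.mul h h')⟩
instance : Neg Q := ⟨Quotient.map .neg (fun _ _ h => R.neg h)⟩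
instance : Zero Q := ⟨mk (.const 0)⟩
instance : One Q := ⟨mk (.const 1)⟩

lemma mk_add (a b : Expr) : mk (.add a b) = mk a + mk b := rfl
lemma mk_mul (a b : Expr) : mk (.mul a b) = mk a * mk b := rfl
lemma mk_neg (a : Expr) : mk (.neg a) = -(mk a) := rfl
lemma mk_zero : mk (.const 0) = 0 := rfl
lemma mk_one : mk (.const 1) = 1 := rfl

lemma sound {a b : Expr} (h : R a b) : mk a = mk b := Quotient.sound h
lemma exact {a b : Expr} (h : mk a = mk b) : R a b := Quotient.exact h

-- ring axioms as R-statements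
lemma R_add_assoc (a b c : Expr) : R (.add (.add a b) c) (.add a (.add b c)) := by
  intro n x; simp only [c_add]; ring

lemma R_add_comm (a b : Expr) : R (.add a b) (.add b a) := by
  intro n x; simp only [c_add]; ring

lemma R_zero_add (a : Expr) : R (.add (.const 0) a) a := by
  intro n x; simp only [c_add, c_zero]; ring

lemma R_add_zero (a : Expr) : R (.add a (.const 0)) a := by
  intro n x; simp only [c_add, c_zero]; ring

lemma R_neg_add_cancel (a : Expr) : R (.add (.neg a) a) (.const 0) := by
  intro n x; simp only [c_add, c_neg, c_zero]; ring

lemma R_zero_mul (a : Expr) : R (.mul (.const 0) a) (.const 0) := by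
  intro n x
  induction n generalizing a x with
  | zero => show (0:ℝ) * a.fwd x = 0; ring
  | succ n ih =>
      rw [c_succ]
      show (Expr.D^[n] (.add (.mul (.const 0) a) (.mul (.const 0) a.D))).fwd x = _
      rw [c_add, ih a.D x, ih a x, c_zero, c_zero]; ring

lemma R_mul_comm (a b : Expr) : R (.mul a b) (.mul b a) := by
  intro n x
  induction n generalizing a b x with
  | zero => show a.fwd x * b.fwd x = b.fwd x * a.fwd x; ring
  | succ n ih =>
      rw [c_succ, c_succ]
      show (Expr.D^[n] (.add (.mul a.D b) (.mul a b.D))).fwd x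
        = (Expr.D^[n] (.add (.mul b.D a) (.mul b a.D))).fwd x
      rw [c_add, c_add, ih a.D b x, ih a b.D x]; ring

lemma R_one_mul (a : Expr) : R (.mul (.const 1) a) a := by
  intro n x
  induction n generalizing a x with
  | zero => show (1:ℝ) * a.fwd x = a.fwd x; ring
  | succ n ih =>
      rw [c_succ]
      show (Expr.D^[n] (.add (.mul (.const 0) a) (.mul (.const 1) a.D))).fwd x = _
      rw [c_add, R_zero_mul a n x, ih a.D x, c_zero, c_succ]; ring

lemma R_rdistrib (u v w : Expr) : R (.mul (.add u v) w) (.add (.mul u w) (.mul v w)) := by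
  intro n x
  induction n generalizing u v w x with
  | zero =>
      show (u.fwd x + v.fwd x) * w.fwd x = u.fwd x * w.fwd x + v.fwd x * w.fwd x; ring
  | succ n ih =>
      rw [c_succ, c_succ]
      show (Expr.D^[n] (.add (.mul (.add u.D v.D) w) (.mul (.add u v) w.D))).fwd x
        = (Expr.D^[n] (.add (.add (.mul u.D w) (.mul u w.D))
            (.add (.mul v.D w) (.mul v w.D)))).fwd x
      simp only [c_add]
      rw [ih u.D v.D w x, ih u v w.D x]
      simp only [c_add]; ring

lemma R_ldistrib (u v w : Expr) : R (.mul u (.add v w)) (.add (.mul u v) (.mul u w)) := by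
  refine ((R_mul_comm u _).trans' ((R_rdistrib v w u).trans' ?_))
  exact R.add (R_mul_comm v u) (R_mul_comm w u)

lemma R_mul_assoc (a b c : Expr) : R (.mul (.mul a b) c) (.mul a (.mul b c)) := by
  intro n x
  induction n generalizing a b c x with
  | zero =>
      show (a.fwd x * b.fwd x) * c.fwd x = a.fwd x * (b.fwd x * c.fwd x); ring
  | succ n ih =>
      rw [c_succ, c_succ]
      show (Expr.D^[n] (.add (.mul (.add (.mul a.D b) (.mul a b.D)) c)
              (.mul (.mul a b) c.D))).fwd x
        = (Expr.D^[n] (.add (.mul a.D (.mul b c))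
              (.mul a (.add (.mul b.D c) (.mul b c.D))))).fwd x
      simp only [c_add]
      rw [R_rdistrib (.mul a.D b) (.mul a b.D) c n x,
          R_ldistrib a (.mul b.D c) (.mul b c.D) n x]
      simp only [c_add]
      rw [ih a.D b c x, ih a b.D c x, ih a b c.D x]
      ring

instance : CommRing Q where
  add_assoc := by
    rintro ⟨a⟩ ⟨b⟩ ⟨c⟩; exact sound (R_add_assoc a b c)
  add_comm := by
    rintro ⟨a⟩ ⟨b⟩; exact sound (R_add_comm a b)
  zero_add := by rintro ⟨a⟩; exact sound (R_zero_add a)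
  add_zero := by rintro ⟨a⟩; exact sound (R_add_zero a)
  neg_add_cancel := by rintro ⟨a⟩; exact sound (R_neg_add_cancel a)
  mul_assoc := by rintro ⟨a⟩ ⟨b⟩ ⟨c⟩; exact sound (R_mul_assoc a b c)
  mul_comm := by rintro ⟨a⟩ ⟨b⟩; exact sound (R_mul_comm a b)
  one_mul := by rintro ⟨a⟩; exact sound (R_one_mul a)
  mul_one := by
    rintro ⟨a⟩
    exact sound ((R_mul_comm a (.const 1)).trans' (R_one_mul a))
  zero_mul := by rintro ⟨a⟩; exact sound (R_zero_mul a)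
  mul_zero := by
    rintro ⟨a⟩
    exact sound ((R_mul_comm a (.const 0)).trans' (R_zero_mul a))
  left_distrib := by rintro ⟨a⟩ ⟨b⟩ ⟨c⟩; exact sound (R_ldistrib a b c)
  right_distrib := by rintro ⟨a⟩ ⟨b⟩ ⟨c⟩; exact sound (R_rdistrib a b c)
  nsmul := nsmulRec
  zsmul := zsmulRec

lemma key (a b : Expr) : ∀ n (f : Expr) (x : ℝ),
    (Expr.D^[n] (.mul (magicbox (.add a b)) f)).fwd x
      = (Expr.D^[n] (.mul (.mul (magicbox a) (magicbox b)) f)).fwd x := by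
  intro n
  induction n with
  | zero =>
      intro f x
      show Real.exp (a.fwd x + b.fwd x + -(a.fwd x + b.fwd x)) * f.fwd x
        = Real.exp (a.fwd x + -a.fwd x) * Real.exp (b.fwd x + -b.fwd x) * f.fwd x
      rw [add_neg_cancel, add_neg_cancel, add_neg_cancel, Real.exp_zero]
      ring
  | succ n ih =>
      intro f x
      rw [c_succ, c_succ]
      -- unfold one derivative on each side
      show (Expr.D^[n] (.add (.mul ((magicbox (.add a b)).D) f)
              (.mul (magicbox (.add a b)) f.D))).fwd x
        = (Expr.D^[n] (.add (.mul (.add (.mul (magicbox a).D (magicbox b))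
              (.mul (magicbox a) (magicbox b).D)) f)
              (.mul (.mul (magicbox a) (magicbox b)) f.D))).fwd x
      simp only [c_add]
      -- second summands agree by the induction hypothesis
      rw [ih f.D x]
      -- first summands: move to the quotient ring and use the IH
      have hD : ∀ g : Expr, (magicbox g).D
          = .mul (magicbox g) (.add g.D (.neg (.const 0))) := by
        intro g; rfl
      rw [hD, hD, hD]
      have h1 : R (.mul (.mul (magicbox (.add a b))
            (.add (Expr.add a b).D (.neg (.const 0)))) f)
          (.mul (magicbox (.add a b))
            (.mul (.add (Expr.add a b).D (.neg (.const 0))) f)) :=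
        R_mul_assoc _ _ _
      rw [h1 n x, ih (.mul (.add (Expr.add a b).D (.neg (.const 0))) f) x]
      -- now a pure ring identity in Q
      have h2 : R
          (.mul (.mul (magicbox a) (magicbox b))
            (.mul (.add (Expr.add a b).D (.neg (.const 0))) f))
          (.mul (.add
            (.mul (.mul (magicbox a) (.add a.D (.neg (.const 0)))) (magicbox b))
            (.mul (magicbox a) (.mul (magicbox b) (.add b.D (.neg (.const 0)))))) f) := by
        apply exact
        show mk _ = mk _
        simp only [Expr.D, mk_mul, mk_add, mk_neg, mk_zero]
        ring
      rw [h2 n x]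

end MBox

/-- Summation inside a MagicBox is equivalent under forward evaluation, at every order of
differentiation `n`, to multiplication of the separate MagicBoxes:
`∇ₓⁿ ⊡(l₁(x) + l₂(x)) f(x) ≡ ∇ₓⁿ ⊡(l₁(x)) ⊡(l₂(x)) f(x)`. -/
theorem magicbox_sum_eq_prod (l₁ l₂ f : Expr) (n : ℕ) (x : ℝ) :
    (Expr.D^[n] (Expr.mul (magicbox (Expr.add l₁ l₂)) f)).fwd x
      = (Expr.D^[n] (Expr.mul (Expr.mul (magicbox l₁) (magicbox l₂)) f)).fwd x := by
  exact MBox.key l₁ l₂ n f x
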